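/- arXiv:0905.2621 — 2 statements merged into one kernel-verified Lean document; each statement's English description precedes it below -/
import Mathlib

section
/- Let H be a triangulated category and B, C ⊆ H full triangulated subcategories such that Hom_H(B,C) = 0 for all objects B ∈ B and C ∈ C. Then for any B ∈ B and X ∈ H, the natural map Hom_H(B, X) → Hom_{H/C}(B, X) is an isomorphism, and for any C ∈ C and X ∈ H, the natural map Hom_H(X, C) → Hom_{H/B}(X, C) is an isomorphism. In particular, the induced functors B → H/C and C → H/B are fully faithful. -/
open CategoryTheory Limits Pretriangulated Opposite

namespace CategoryTheory.Triangulated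

variable (C : Type*) [Category C] [HasZeroObject C] [HasShift C ℤ] [Preadditive C]
  [∀ n : ℤ, (shiftFunctor C n).Additive] [Pretriangulated C]

structure Subcategory where
  P : C → Prop
  zero' : ∃ (Z : C) (_ : IsZero Z), P Z
  shift (X : C) (n : ℤ) : P X → P (X⟦n⟧)
  ext₂' (T : Triangle C) (_ : T ∈ distTriang C) : P T.obj₁ → P T.obj₃ →
    ObjectProperty.isoClosure P T.obj₂

variable {C}

def Subcategory.W (S : Subcategory C) : MorphismProperty C := fun X Y f =>
  ∃ (Z : C) (g : Y ⟶ Z) (h : Z ⟶ X⟦(1 : ℤ)⟧) (_ : Triangle.mk f g h ∈ distTriang C), S.P Z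

end CategoryTheory.Triangulated

namespace CategoryTheory.Triangulated

theorem Subcategory.W_iff' {H : Type*} [Category H] [HasZeroObject H] [HasShift H ℤ]
    [Preadditive H] [∀ n : ℤ, (shiftFunctor H n).Additive] [Pretriangulated H]
    (S : Subcategory H) {Y Z : H} (g : Y ⟶ Z) :
    S.W g ↔ ∃ (X : H) (f : X ⟶ Y) (h : Z ⟶ X⟦(1 : ℤ)⟧)
      (_ : Triangle.mk f g h ∈ distTriang H), S.P X := by
  constructor
  · rintro ⟨c, u, v, hT, hc⟩
    exact ⟨_, _, _, inv_rot_of_distTriang _ hT, S.shift _ _ hc⟩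
  · rintro ⟨X, f, h, hT, hX⟩
    exact ⟨_, _, _, rot_of_distTriang _ hT, S.shift _ _ hX⟩

end CategoryTheory.Triangulated

section LocAux

open CategoryTheory.Localization.Construction

variable {H : Type*} [Category H] (W : MorphismProperty H)

/-- If two parallel morphisms are identified by the localization functor, then any
functor inverting `W` identifies them. -/
lemma aux_loc_map_eq {D : Type*} [Category D] (G : H ⥤ D) (hG : W.IsInvertedBy G)
    {X Z : H} {f f' : X ⟶ Z} (h : W.Q.map f = W.Q.map f') : G.map f = G.map f' := by
  have h1 := Functor.congr_hom (fac G hG) f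
  have h2 := Functor.congr_hom (fac G hG) f'
  rw [Functor.comp_map, h, ← Functor.comp_map, h2, cancel_epi, cancel_mono] at h1
  exact h1.symm

/-- Surjectivity of `Hom(X, Z) → Hom(QX, QZ)` when every morphism of `W` with target
`A'` admits factorizations of all morphisms `X ⟶ A'`. -/
lemma aux_loc_surj_left (X : H)
    (hfac : ∀ ⦃A A' : H⦄ (w : A ⟶ A'), W w → ∀ g : X ⟶ A', ∃ h : X ⟶ A, g = h ≫ w)
    {Z : H} (φ : W.Q.obj X ⟶ W.Q.obj Z) : ∃ f : X ⟶ Z, W.Q.map f = φ := by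
  let P : MorphismProperty W.Localization := fun A A' χ =>
    ∀ ⦃Y₀ : H⦄ (g₀ : X ⟶ Y₀) (hA : W.Q.obj Y₀ = A),
      ∃ (Y₁ : H) (g₁ : X ⟶ Y₁) (hA' : W.Q.obj Y₁ = A'),
        (W.Q.map g₀ ≫ eqToHom hA) ≫ χ = W.Q.map g₁ ≫ eqToHom hA'
  haveI : P.IsStableUnderComposition := ⟨by
    intro A A' A'' χ χ' hχ hχ' Y₀ g₀ hA
    obtain ⟨Y₁, g₁, hA', e⟩ := hχ g₀ hA
    obtain ⟨Y₂, g₂, hA'', e'⟩ := hχ' g₁ hA'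
    exact ⟨Y₂, g₂, hA'', by rw [← Category.assoc, e, e']⟩⟩
  have hP₁ : ∀ ⦃Y Y' : H⦄ (f : Y ⟶ Y'), P (W.Q.map f) := by
    intro Y Y' f Y₀ g₀ hA
    obtain rfl : Y₀ = Y := (objEquiv W).injective hA
    exact ⟨Y', g₀ ≫ f, rfl, by simp⟩
  have hP₂ : ∀ ⦃A A' : H⦄ (w : A ⟶ A') (hw : W w), P (wInv w hw) := by
    intro A A' w hw Y₀ g₀ hA
    obtain rfl : Y₀ = A' := (objEquiv W).injective hA
    obtain ⟨h, rfl⟩ := hfac w hw g₀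
    refine ⟨A, h, rfl, ?_⟩
    have hw' : W.Q.map w ≫ wInv w hw = 𝟙 _ := (wIso w hw).hom_inv_id
    simp [Functor.map_comp, hw']
  have htop := morphismProperty_eq_top P hP₁ hP₂
  have hP : P φ := by rw [htop]; exact MorphismProperty.top_apply φ
  obtain ⟨Y₁, g₁, hA', e⟩ := hP (𝟙 X) rfl
  obtain rfl : Y₁ = Z := (objEquiv W).injective hA'
  exact ⟨g₁, by simpa using e.symm⟩

/-- Dual surjectivity statement: `Hom(Z, Y) → Hom(QZ, QY)` is surjective when every
morphism of `W` with source `A` admits factorizations of all morphisms `A ⟶ Y`. -/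
lemma aux_loc_surj_right (Y : H)
    (hfac : ∀ ⦃A A' : H⦄ (w : A ⟶ A'), W w → ∀ g : A ⟶ Y, ∃ h : A' ⟶ Y, g = w ≫ h)
    {Z : H} (φ : W.Q.obj Z ⟶ W.Q.obj Y) : ∃ f : Z ⟶ Y, W.Q.map f = φ := by
  let P : MorphismProperty W.Localization := fun A A' χ =>
    ∀ ⦃Y₁ : H⦄ (g₁ : Y₁ ⟶ Y) (hA' : W.Q.obj Y₁ = A'),
      ∃ (Y₀ : H) (g₀ : Y₀ ⟶ Y) (hA : W.Q.obj Y₀ = A),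
        χ ≫ eqToHom hA'.symm ≫ W.Q.map g₁ = eqToHom hA.symm ≫ W.Q.map g₀
  haveI : P.IsStableUnderComposition := ⟨by
    intro A A' A'' χ χ' hχ hχ' Y₁ g₁ hA''
    obtain ⟨Ym, gm, hAm, e'⟩ := hχ' g₁ hA''
    obtain ⟨Y₀, g₀, hA, e⟩ := hχ gm hAm
    exact ⟨Y₀, g₀, hA, by rw [Category.assoc, e', e]⟩⟩
  have hP₁ : ∀ ⦃Y' Y'' : H⦄ (f : Y' ⟶ Y''), P (W.Q.map f) := by
    intro Y' Y'' f Y₁ g₁ hA'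
    obtain rfl : Y₁ = Y'' := (objEquiv W).injective hA'
    exact ⟨Y', f ≫ g₁, rfl, by simp⟩
  have hP₂ : ∀ ⦃A A' : H⦄ (w : A ⟶ A') (hw : W w), P (wInv w hw) := by
    intro A A' w hw Y₁ g₁ hA'
    obtain rfl : Y₁ = A := (objEquiv W).injective hA'
    obtain ⟨h, rfl⟩ := hfac w hw g₁
    refine ⟨A', h, rfl, ?_⟩
    have hw' : wInv w hw ≫ W.Q.map w = 𝟙 _ := (wIso w hw).inv_hom_id
    simp only [eqToHom_refl, Category.id_comp, Functor.map_comp, ← Category.assoc, hw']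
  have htop := morphismProperty_eq_top P hP₁ hP₂
  have hP : P φ := by rw [htop]; exact MorphismProperty.top_apply φ
  obtain ⟨Y₀, g₀, hA, e⟩ := hP (𝟙 Y) rfl
  obtain rfl : Y₀ = Z := (objEquiv W).injective hA
  exact ⟨g₀, by simpa using e.symm⟩

end LocAux

section TriAux

variable {H : Type*} [Category H] [HasZeroObject H] [HasShift H ℤ] [Preadditive H]
  [∀ n : ℤ, (shiftFunctor H n).Additive] [Pretriangulated H]
  (B C : Triangulated.Subcategory H)
  (horth : ∀ (X Y : H), B.P X → C.P Y → ∀ f : X ⟶ Y, f = 0)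

include horth

lemma aux_factor_left {X A A' : H} (hX : B.P X) (t : A ⟶ A') (ht : C.W t)
    (f : X ⟶ A') : ∃ g : X ⟶ A, f = g ≫ t := by
  obtain ⟨c, u, v, hT, hc⟩ := ht
  exact Pretriangulated.Triangle.coyoneda_exact₂ _ hT f (horth X c hX hc _)

lemma aux_cancel_left {X A A' : H} (hX : B.P X) (t : A ⟶ A') (ht : C.W t)
    {g g' : X ⟶ A} (h : g ≫ t = g' ≫ t) : g = g' := by
  rw [C.W_iff'] at ht
  obtain ⟨a, w, v, hT, ha⟩ := ht
  obtain ⟨h', hh'⟩ := Pretriangulated.Triangle.coyoneda_exact₂ _ hT (g - g')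
    ((Preadditive.sub_comp _ _ _).trans (sub_eq_zero.2 h))
  simp only [horth X a hX ha h', zero_comp] at hh'
  exact sub_eq_zero.1 (hh'.trans zero_comp)

lemma aux_factor_right {Y A A' : H} (hY : C.P Y) (t : A ⟶ A') (ht : B.W t)
    (f : A ⟶ Y) : ∃ g : A' ⟶ Y, f = t ≫ g := by
  rw [B.W_iff'] at ht
  obtain ⟨a, w, v, hT, ha⟩ := ht
  exact Pretriangulated.Triangle.yoneda_exact₂ _ hT f (horth a Y ha hY _)

lemma aux_cancel_right {Y A A' : H} (hY : C.P Y) (t : A ⟶ A') (ht : B.W t)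
    {g g' : A' ⟶ Y} (h : t ≫ g = t ≫ g') : g = g' := by
  obtain ⟨c, u, v, hT, hc⟩ := ht
  obtain ⟨h', hh'⟩ := Pretriangulated.Triangle.yoneda_exact₂ _ hT (g - g')
    ((Preadditive.comp_sub _ _ _).trans (sub_eq_zero.2 h))
  simp only [horth c Y hc hY h', comp_zero] at hh'
  exact sub_eq_zero.1 (hh'.trans comp_zero)

end TriAux

/-- Let `H` be a (pre)triangulated category and `B`, `C` full
triangulated subcategories with `Hom_H(B, C) = 0` for all `B ∈ B`, `C ∈ C`.  Then for
`B ∈ B` and any `X`, the map `Hom_H(B, X) → Hom_{H/C}(B, X)` induced by the Verdier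
localization functor is bijective; dually, for `C ∈ C` and any `X`, the map
`Hom_H(X, C) → Hom_{H/B}(X, C)` is bijective.  (In particular, the induced functors
`B → H/C` and `C → H/B` are fully faithful.) -/
theorem verdier_quotient_hom_iso
    {H : Type*} [Category H] [HasZeroObject H] [HasShift H ℤ] [Preadditive H]
    [∀ n : ℤ, (shiftFunctor H n).Additive] [Pretriangulated H]
    (B C : Triangulated.Subcategory H)
    (horth : ∀ (X Y : H), B.P X → C.P Y → ∀ f : X ⟶ Y, f = 0) :
    (∀ (X Z : H), B.P X →
      Function.Bijective (fun f : X ⟶ Z => C.W.Q.map f)) ∧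
    (∀ (Z Y : H), C.P Y →
      Function.Bijective (fun f : Z ⟶ Y => B.W.Q.map f)) := by
  constructor
  · intro X Z hX
    constructor
    · -- injectivity via the coyoneda functor of X, which inverts C.W
      intro f f' hff'
      have hinv : C.W.IsInvertedBy (coyoneda.obj (op X)) := by
        intro A A' t ht
        rw [CategoryTheory.isIso_iff_bijective]
        constructor
        · intro g g' hgg'
          exact aux_cancel_left B C horth hX t ht (by simpa using hgg')
        · intro f0
          obtain ⟨g, hg⟩ := aux_factor_left B C horth hX t ht f0
          exact ⟨g, hg.symm⟩
      have := aux_loc_map_eq C.W (coyoneda.obj (op X)) hinv hff'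
      simpa using ConcreteCategory.congr_hom this (𝟙 X)
    · intro φ
      exact aux_loc_surj_left C.W X
        (fun A A' w hw g => aux_factor_left B C horth hX w hw g) φ
  · intro Z Y hY
    constructor
    · -- injectivity via the yoneda functor of Y, which inverts B.W
      intro f f' hff'
      have hinv : B.W.IsInvertedBy (yoneda.obj Y).rightOp := by
        intro A A' t ht
        haveI : IsIso ((yoneda.obj Y).map t.op) := by
          rw [CategoryTheory.isIso_iff_bijective]
          constructor
          · intro g g' hgg'
            exact aux_cancel_right B C horth hY t ht (by simpa using hgg')
          · intro f0
            obtain ⟨g, hg⟩ := aux_factor_right B C horth hY t ht f0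
            exact ⟨g, hg.symm⟩
        show IsIso (((yoneda.obj Y).map t.op).op)
        infer_instance
      have := aux_loc_map_eq B.W (yoneda.obj Y).rightOp hinv hff'
      have h2 : (yoneda.obj Y).map f.op = (yoneda.obj Y).map f'.op :=
        Quiver.Hom.op_inj this
      simpa using ConcreteCategory.congr_hom h2 (𝟙 Y)
    · intro φ
      exact aux_loc_surj_right B.W Y
        (fun A A' w hw g => aux_factor_right B C horth hY w hw g) φ
end

section
/- Let C be a graded coalgebra over a field k, N a graded right C-comodule, M a graded left C-comodule, and V a graded k-vector space. Endow Hom_k(N,V) with its natural graded left C-contramodule structure induced by the right coaction of C on N. Then there is a natural isomorphism of graded vector spaces Hom_k(N □_C M, V) ≅ Cohom_C(M, Hom_k(N,V)). -/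
open TensorProduct

section

variable {k : Type} [Field k]
  {C : Type} [AddCommGroup C] [Module k C] [Coalgebra k C]
  {N : Type} [AddCommGroup N] [Module k N]
  {M : Type} [AddCommGroup M] [Module k M]
  {V : Type} [AddCommGroup V] [Module k V]

/-- The cotensor product `N □_C M`: the kernel (equalizer) of the two natural maps
`N ⊗ M ⇉ N ⊗ (C ⊗ M)` induced by the right coaction on `N` and the left coaction
on `M`. -/
noncomputable def cotensor (ρN : N →ₗ[k] N ⊗[k] C) (ρM : M →ₗ[k] C ⊗[k] M) :
    Submodule k (N ⊗[k] M) :=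
  LinearMap.ker
    (((TensorProduct.assoc k N C M).toLinearMap.comp
        (TensorProduct.map ρN LinearMap.id))
      - TensorProduct.map LinearMap.id ρM)

/-- The contraaction `Hom_k(C, Hom_k(N, V)) → Hom_k(N, V)` on `Hom_k(N, V)` induced
by the right coaction on `N`: `π(g) = (lift g.flip) ∘ ρ_N`. -/
noncomputable def homContraaction (ρN : N →ₗ[k] N ⊗[k] C) :
    (C →ₗ[k] (N →ₗ[k] V)) →ₗ[k] (N →ₗ[k] V) :=
  (LinearMap.lcomp k V ρN).comp
    ((TensorProduct.lift.equiv (RingHom.id k) N C V).toLinearMap.comp LinearMap.lflip.toLinearMap)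

/-- The difference of the two maps `Hom_k(C ⊗ M, P) ⇉ Hom_k(M, P)` (for
`P = Hom_k(N, V)`) whose cokernel is `Cohom_C(M, Hom_k(N, V))`: one is induced by
the coaction on `M`, the other by the contraaction on `Hom_k(N, V)`. -/
noncomputable def cohomRelations (ρN : N →ₗ[k] N ⊗[k] C) (ρM : M →ₗ[k] C ⊗[k] M) :
    (C ⊗[k] M →ₗ[k] (N →ₗ[k] V)) →ₗ[k] (M →ₗ[k] (N →ₗ[k] V)) :=
  LinearMap.lcomp k (N →ₗ[k] V) ρM
    - ((LinearMap.llcomp k M (C →ₗ[k] (N →ₗ[k] V)) (N →ₗ[k] V)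
          (homContraaction (V := V) ρN)).comp
        (LinearMap.lflip.comp (TensorProduct.lcurry (RingHom.id k) C M (N →ₗ[k] V))))

end

section Aux

open TensorProduct DirectSum

variable {k : Type} [Field k]

section Proj
variable {W : Type} [AddCommGroup W] [Module k W]

/-- The degree-`a` projection of a graded vector space. -/
noncomputable def gproj (𝒲 : ℤ → Submodule k W) [Decomposition 𝒲] (a : ℤ) : W →ₗ[k] W :=
  (𝒲 a).subtype ∘ₗ (DirectSum.component k ℤ (fun i => ↥(𝒲 i)) a) ∘ₗ
    (DirectSum.decomposeLinearEquiv 𝒲).toLinearMap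

variable (𝒲 : ℤ → Submodule k W) [Decomposition 𝒲]

lemma gproj_apply (a : ℤ) (x : W) : gproj 𝒲 a x = (DirectSum.decompose 𝒲 x a : W) := rfl

lemma gproj_mem (a : ℤ) (x : W) : gproj 𝒲 a x ∈ 𝒲 a := (DirectSum.decompose 𝒲 x a).2

lemma gproj_of_mem_same {a : ℤ} {x : W} (hx : x ∈ 𝒲 a) : gproj 𝒲 a x = x := by
  rw [gproj_apply, DirectSum.decompose_of_mem_same 𝒲 hx]

lemma gproj_of_mem_ne {a b : ℤ} {x : W} (hx : x ∈ 𝒲 b) (h : b ≠ a) : gproj 𝒲 a x = 0 := by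
  rw [gproj_apply, DirectSum.decompose_of_mem_ne 𝒲 hx h]

lemma gproj_sum (x : W) : ∃ s : Finset ℤ,
    (∀ a ∉ s, gproj 𝒲 a x = 0) ∧ x = ∑ a ∈ s, gproj 𝒲 a x := by
  classical
  refine ⟨(DirectSum.decompose 𝒲 x).support, fun a ha => ?_, ?_⟩
  · rw [gproj_apply]
    simpa using DFinsupp.notMem_support_iff.mp ha
  · conv_lhs => rw [← DirectSum.sum_support_decompose 𝒲 x]
    exact Finset.sum_congr rfl fun a _ => (gproj_apply 𝒲 a x).symm

end Proj

section ProjTensor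

variable {W₁ W₂ : Type} [AddCommGroup W₁] [Module k W₁] [AddCommGroup W₂] [Module k W₂]
  {ι₁ ι₂ : Type} [DecidableEq ι₁] [DecidableEq ι₂]

/-- Tensor product of two "finitely supported projection families" is one. -/
lemma proj_sum_tensor (P : ι₁ → W₁ →ₗ[k] W₁) (Q : ι₂ → W₂ →ₗ[k] W₂)
    (hP : ∀ x, ∃ s : Finset ι₁, (∀ a ∉ s, P a x = 0) ∧ x = ∑ a ∈ s, P a x)
    (hQ : ∀ y, ∃ s : Finset ι₂, (∀ a ∉ s, Q a y = 0) ∧ y = ∑ a ∈ s, Q a y)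
    (z : W₁ ⊗[k] W₂) : ∃ s : Finset (ι₁ × ι₂),
      (∀ t ∉ s, TensorProduct.map (P t.1) (Q t.2) z = 0) ∧
      z = ∑ t ∈ s, TensorProduct.map (P t.1) (Q t.2) z := by
  induction z using TensorProduct.induction_on with
  | zero => exact ⟨∅, fun t _ => by simp, by simp⟩
  | tmul x y =>
    obtain ⟨s₁, hs₁, hx⟩ := hP x
    obtain ⟨s₂, hs₂, hy⟩ := hQ y
    refine ⟨s₁ ×ˢ s₂, fun t ht => ?_, ?_⟩
    · rw [TensorProduct.map_tmul]
      rcases not_and_or.mp (fun h => ht (Finset.mem_product.mpr h)) with h | h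
      · rw [hs₁ _ h, TensorProduct.zero_tmul]
      · rw [hs₂ _ h, TensorProduct.tmul_zero]
    · simp only [TensorProduct.map_tmul]
      rw [Finset.sum_product]
      conv_lhs => rw [hx, hy]
      rw [TensorProduct.sum_tmul]
      exact Finset.sum_congr rfl fun a _ => by rw [TensorProduct.tmul_sum]
  | add z₁ z₂ ih₁ ih₂ =>
    obtain ⟨s₁, hs₁, hz₁⟩ := ih₁
    obtain ⟨s₂, hs₂, hz₂⟩ := ih₂
    classical
    refine ⟨s₁ ∪ s₂, fun t ht => ?_, ?_⟩
    · rw [map_add, hs₁ _ fun h => ht (Finset.mem_union_left _ h),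
        hs₂ _ fun h => ht (Finset.mem_union_right _ h), add_zero]
    · have e₁ : z₁ = ∑ t ∈ s₁ ∪ s₂, TensorProduct.map (P t.1) (Q t.2) z₁ :=
        hz₁.trans (Finset.sum_subset Finset.subset_union_left fun t _ ht => hs₁ t ht)
      have e₂ : z₂ = ∑ t ∈ s₁ ∪ s₂, TensorProduct.map (P t.1) (Q t.2) z₂ :=
        hz₂.trans (Finset.sum_subset Finset.subset_union_right fun t _ ht => hs₂ t ht)
      simp only [map_add, Finset.sum_add_distrib]
      rw [← e₁, ← e₂]

end ProjTensor

section Graded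

variable {C N M : Type} [AddCommGroup C] [Module k C] [AddCommGroup N] [Module k N]
  [AddCommGroup M] [Module k M]
variable (𝒩 : ℤ → Submodule k N) (𝒞 : ℤ → Submodule k C) (ℳ : ℤ → Submodule k M)
variable [Decomposition 𝒩] [Decomposition 𝒞] [Decomposition ℳ]

/-- Tridegree projection on `N ⊗ (C ⊗ M)`. -/
noncomputable def Q3 (t : ℤ × ℤ × ℤ) : N ⊗[k] (C ⊗[k] M) →ₗ[k] N ⊗[k] (C ⊗[k] M) :=
  TensorProduct.map (gproj 𝒩 t.1) (TensorProduct.map (gproj 𝒞 t.2.1) (gproj ℳ t.2.2))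

/-- The degree-`n` part of `N ⊗ (C ⊗ M)`. -/
noncomputable def grU (n : ℤ) : Submodule k (N ⊗[k] (C ⊗[k] M)) :=
  Submodule.span k {z | ∃ a b : ℤ, ∃ x ∈ 𝒩 a, ∃ c ∈ 𝒞 b, ∃ m ∈ ℳ (n - a - b),
    z = x ⊗ₜ[k] (c ⊗ₜ[k] m)}

lemma Q3_sum (z : N ⊗[k] (C ⊗[k] M)) : ∃ s : Finset (ℤ × ℤ × ℤ),
    (∀ t ∉ s, Q3 𝒩 𝒞 ℳ t z = 0) ∧ z = ∑ t ∈ s, Q3 𝒩 𝒞 ℳ t z :=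
  proj_sum_tensor (gproj 𝒩) (fun t : ℤ × ℤ => TensorProduct.map (gproj 𝒞 t.1) (gproj ℳ t.2))
    (gproj_sum 𝒩)
    (fun y => proj_sum_tensor (gproj 𝒞) (gproj ℳ) (gproj_sum 𝒞) (gproj_sum ℳ) y) z

lemma Q3_vanish {n : ℤ} {u : N ⊗[k] (C ⊗[k] M)} (hu : u ∈ grU 𝒩 𝒞 ℳ n)
    {t : ℤ × ℤ × ℤ} (ht : t.1 + t.2.1 + t.2.2 ≠ n) : Q3 𝒩 𝒞 ℳ t u = 0 := by
  induction hu using Submodule.span_induction with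
  | mem z hz =>
    obtain ⟨a, b, x, hx, c, hc, m, hm, rfl⟩ := hz
    simp only [Q3, TensorProduct.map_tmul]
    by_cases ha : a = t.1
    · by_cases hb : b = t.2.1
      · have hm' : (n - a - b : ℤ) ≠ t.2.2 := fun h => ht (by omega)
        rw [gproj_of_mem_ne ℳ hm hm', TensorProduct.tmul_zero, TensorProduct.tmul_zero]
      · rw [gproj_of_mem_ne 𝒞 hc hb, TensorProduct.zero_tmul, TensorProduct.tmul_zero]
    · rw [gproj_of_mem_ne 𝒩 hx ha, TensorProduct.zero_tmul]
  | zero => simp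
  | add _ _ _ _ h₁ h₂ => rw [map_add, h₁, h₂, add_zero]
  | smul r _ _ h => rw [map_smul, h, smul_zero]

lemma grU_indep (s : Finset ℤ) (u : ℤ → N ⊗[k] (C ⊗[k] M))
    (hu : ∀ n ∈ s, u n ∈ grU 𝒩 𝒞 ℳ n) (hsum : ∑ n ∈ s, u n = 0) :
    ∀ m ∈ s, u m = 0 := by
  intro m hm
  obtain ⟨T, hT0, hTsum⟩ := Q3_sum 𝒩 𝒞 ℳ (u m)
  rw [hTsum]
  refine Finset.sum_eq_zero fun t _ => ?_
  by_cases hts : t.1 + t.2.1 + t.2.2 = m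
  · have h0 : ∑ n ∈ s, Q3 𝒩 𝒞 ℳ t (u n) = 0 := by
      rw [← map_sum, hsum, map_zero]
    have hsingle : ∑ n ∈ s, Q3 𝒩 𝒞 ℳ t (u n) = Q3 𝒩 𝒞 ℳ t (u m) :=
      Finset.sum_eq_single_of_mem m hm fun n hn hne =>
        Q3_vanish 𝒩 𝒞 ℳ (hu n hn) (by omega)
    rw [← hsingle, h0]
  · exact Q3_vanish 𝒩 𝒞 ℳ (hu m hm) hts

/-- The degree-`n` part of `N ⊗ M`. -/
noncomputable def grTdef (n : ℤ) : Submodule k (N ⊗[k] M) :=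
  Submodule.span k {z : N ⊗[k] M |
    ∃ a : ℤ, ∃ x ∈ 𝒩 a, ∃ y ∈ ℳ (n - a), z = x ⊗ₜ[k] y}

/-- Bidegree projection on `N ⊗ M`. -/
noncomputable def Q2 (t : ℤ × ℤ) : N ⊗[k] M →ₗ[k] N ⊗[k] M :=
  TensorProduct.map (gproj 𝒩 t.1) (gproj ℳ t.2)

lemma Q2_sum (z : N ⊗[k] M) : ∃ s : Finset (ℤ × ℤ),
    (∀ t ∉ s, Q2 𝒩 ℳ t z = 0) ∧ z = ∑ t ∈ s, Q2 𝒩 ℳ t z :=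
  proj_sum_tensor (gproj 𝒩) (gproj ℳ) (gproj_sum 𝒩) (gproj_sum ℳ) z

lemma Q2_mem_grT (t : ℤ × ℤ) (z : N ⊗[k] M) : Q2 𝒩 ℳ t z ∈ grTdef 𝒩 ℳ (t.1 + t.2) := by
  induction z using TensorProduct.induction_on with
  | zero => simp only [map_zero]; exact zero_mem _
  | tmul x y =>
    refine Submodule.subset_span ⟨t.1, gproj 𝒩 t.1 x, gproj_mem 𝒩 t.1 x,
      gproj ℳ t.2 y, ?_, rfl⟩
    have : t.1 + t.2 - t.1 = t.2 := by ring
    rw [this]; exact gproj_mem ℳ t.2 y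
  | add z₁ z₂ h₁ h₂ => rw [map_add]; exact add_mem h₁ h₂

section Ext

variable {V : Type} [AddCommGroup V] [Module k V] (𝒱 : ℤ → Submodule k V) [Decomposition 𝒱]

/-- The building block of the graded extension. -/
noncomputable def bilExt (p : ℤ) (f : N ⊗[k] M →ₗ[k] V) (a c : ℤ) :
    ↥(𝒩 a) →ₗ[k] ↥(ℳ c) →ₗ[k] V :=
  (((TensorProduct.mk k N M).compl₁₂ (𝒩 a).subtype (ℳ c).subtype).compr₂
    ((gproj 𝒱 (a + c + p)) ∘ₗ f))

/-- A degree-`p` graded map `M →ₗ N →ₗ V` built out of `f : N ⊗ M →ₗ V` by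
homogenization. -/
noncomputable def hExt (p : ℤ) (f : N ⊗[k] M →ₗ[k] V) : M →ₗ[k] (N →ₗ[k] V) :=
  (DirectSum.toModule k ℤ (N →ₗ[k] V) (fun c =>
    (((DirectSum.toModule k ℤ (↥(ℳ c) →ₗ[k] V) (fun a => bilExt 𝒩 ℳ 𝒱 p f a c)) ∘ₗ
      (DirectSum.decomposeLinearEquiv 𝒩).toLinearMap).flip))) ∘ₗ
    (DirectSum.decomposeLinearEquiv ℳ).toLinearMap

lemma hExt_apply (p : ℤ) (f : N ⊗[k] M →ₗ[k] V) {a c : ℤ} {x : N} {y : M}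
    (hx : x ∈ 𝒩 a) (hy : y ∈ ℳ c) :
    hExt 𝒩 ℳ 𝒱 p f y x = gproj 𝒱 (a + c + p) (f (x ⊗ₜ[k] y)) := by
  have h1 : (DirectSum.decomposeLinearEquiv ℳ).toLinearMap y
      = DirectSum.lof k ℤ (fun i => ↥(ℳ i)) c ⟨y, hy⟩ := by
    rw [DirectSum.lof_eq_of]
    exact DirectSum.decompose_of_mem ℳ hy
  have h2 : (DirectSum.decomposeLinearEquiv 𝒩).toLinearMap x
      = DirectSum.lof k ℤ (fun i => ↥(𝒩 i)) a ⟨x, hx⟩ := by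
    rw [DirectSum.lof_eq_of]
    exact DirectSum.decompose_of_mem 𝒩 hx
  rw [hExt, LinearMap.comp_apply, h1, DirectSum.toModule_lof]
  show ((DirectSum.toModule k ℤ (↥(ℳ c) →ₗ[k] V) (fun a => bilExt 𝒩 ℳ 𝒱 p f a c))
    ((DirectSum.decomposeLinearEquiv 𝒩).toLinearMap x)) ⟨y, hy⟩ = _
  rw [h2, DirectSum.toModule_lof]
  rfl

end Ext

end Graded

end Aux


section

variable {k : Type} [Field k]
  {C : Type} [AddCommGroup C] [Module k C] [Coalgebra k C]
  {N : Type} [AddCommGroup N] [Module k N]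
  {M : Type} [AddCommGroup M] [Module k M]
  {V : Type} [AddCommGroup V] [Module k V]

section Extras
open DirectSum

/-- The defining map of the cotensor product. -/
noncomputable def cotD (ρN : N →ₗ[k] N ⊗[k] C) (ρM : M →ₗ[k] C ⊗[k] M) :
    N ⊗[k] M →ₗ[k] N ⊗[k] (C ⊗[k] M) :=
  (((TensorProduct.assoc k N C M).toLinearMap.comp
        (TensorProduct.map ρN LinearMap.id))
      - TensorProduct.map LinearMap.id ρM)

lemma cotensor_eq_ker (ρN : N →ₗ[k] N ⊗[k] C) (ρM : M →ₗ[k] C ⊗[k] M) :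
    cotensor ρN ρM = LinearMap.ker (cotD ρN ρM) := rfl

lemma exists_factor {A B : Type} [AddCommGroup A] [Module k A] [AddCommGroup B] [Module k B]
    (D : A →ₗ[k] B) (f : A →ₗ[k] V) (h : LinearMap.ker D ≤ LinearMap.ker f) :
    ∃ ψ : B →ₗ[k] V, ψ ∘ₗ D = f := by
  obtain ⟨r, hr⟩ := LinearMap.exists_leftInverse_of_injective
    ((LinearMap.ker D).liftQ D le_rfl)
    (Submodule.ker_liftQ_eq_bot _ _ _ le_rfl)
  refine ⟨((LinearMap.ker D).liftQ f h) ∘ₗ r, ?_⟩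
  apply LinearMap.ext
  intro x
  have h2 := DFunLike.congr_fun hr ((LinearMap.ker D).mkQ x)
  simp only [LinearMap.comp_apply, LinearMap.id_apply] at h2
  have h3 : ((LinearMap.ker D).liftQ D le_rfl) ((LinearMap.ker D).mkQ x) = D x := by
    simp [Submodule.mkQ_apply, Submodule.liftQ_apply]
  show ((LinearMap.ker D).liftQ f h) (r (D x)) = f x
  rw [← h3, h2]
  simp [Submodule.mkQ_apply, Submodule.liftQ_apply]

lemma liftflip_inj {h h' : M →ₗ[k] (N →ₗ[k] V)}
    (H : TensorProduct.lift h.flip = TensorProduct.lift h'.flip) : h = h' := by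
  ext y x
  have := DFunLike.congr_fun H (x ⊗ₜ[k] y)
  simpa using this

lemma cotD_mem_grU (𝒩 : ℤ → Submodule k N) (𝒞 : ℤ → Submodule k C) (ℳ : ℤ → Submodule k M)
    [Decomposition 𝒩] [Decomposition 𝒞] [Decomposition ℳ]
    (ρN : N →ₗ[k] N ⊗[k] C) (ρM : M →ₗ[k] C ⊗[k] M)
    (ρN_graded : ∀ n : ℤ, ∀ z ∈ 𝒩 n, ∃ (ι : Type) (s : Finset ι)
        (x₀ : ι → N) (x₁ : ι → C) (degx : ι → ℤ),
        (∀ t ∈ s, x₀ t ∈ 𝒩 (degx t) ∧ x₁ t ∈ 𝒞 (n - degx t)) ∧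
        ρN z = ∑ t ∈ s, x₀ t ⊗ₜ[k] x₁ t)
    (ρM_graded : ∀ n : ℤ, ∀ z ∈ ℳ n, ∃ (ι : Type) (s : Finset ι)
        (y₁ : ι → C) (y₀ : ι → M) (degy : ι → ℤ),
        (∀ t ∈ s, y₁ t ∈ 𝒞 (degy t) ∧ y₀ t ∈ ℳ (n - degy t)) ∧
        ρM z = ∑ t ∈ s, y₁ t ⊗ₜ[k] y₀ t)
    {n : ℤ} {z : N ⊗[k] M} (hz : z ∈ grTdef 𝒩 ℳ n) :
    cotD ρN ρM z ∈ grU 𝒩 𝒞 ℳ n := by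
  induction hz using Submodule.span_induction with
  | mem w hw =>
    obtain ⟨a, x, hx, y, hy, rfl⟩ := hw
    obtain ⟨ι, s, x₀, x₁, degx, hdeg, hρ⟩ := ρN_graded a x hx
    obtain ⟨ι', s', y₁, y₀, degy, hdeg', hρ'⟩ := ρM_graded (n - a) y hy
    have hcot : cotD ρN ρM (x ⊗ₜ[k] y)
        = (∑ t ∈ s, x₀ t ⊗ₜ[k] (x₁ t ⊗ₜ[k] y)) - ∑ t ∈ s', x ⊗ₜ[k] (y₁ t ⊗ₜ[k] y₀ t) := by
      simp only [cotD, LinearMap.sub_apply, LinearMap.comp_apply, TensorProduct.map_tmul,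
        LinearMap.id_apply, hρ, hρ', TensorProduct.sum_tmul, TensorProduct.tmul_sum,
        map_sum, LinearEquiv.coe_coe, TensorProduct.assoc_tmul]
    rw [hcot]
    refine sub_mem (Submodule.sum_mem _ fun t ht => ?_) (Submodule.sum_mem _ fun t ht => ?_)
    · refine Submodule.subset_span ⟨degx t, a - degx t, x₀ t, (hdeg t ht).1,
        x₁ t, (hdeg t ht).2, y, ?_, rfl⟩
      rw [show n - degx t - (a - degx t) = n - a by ring]
      exact hy
    · exact Submodule.subset_span ⟨a, degy t, x, hx, y₁ t, (hdeg' t ht).1,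
        y₀ t, (hdeg' t ht).2, rfl⟩
  | zero => simp only [map_zero]; exact zero_mem _
  | add _ _ _ _ h₁ h₂ => rw [map_add]; exact add_mem h₁ h₂
  | smul r _ _ h => rw [map_smul]; exact Submodule.smul_mem _ r h

lemma cohomRelations_lift (ρN : N →ₗ[k] N ⊗[k] C) (ρM : M →ₗ[k] C ⊗[k] M)
    (g : C ⊗[k] M →ₗ[k] (N →ₗ[k] V)) :
    TensorProduct.lift ((cohomRelations (V := V) ρN ρM g).flip)
      = -((TensorProduct.lift g.flip).comp (cotD ρN ρM)) := by
  apply TensorProduct.ext'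
  intro x y
  simp only [cohomRelations, homContraaction, cotD, LinearMap.sub_apply, LinearMap.comp_apply,
    TensorProduct.lift.tmul, LinearMap.flip_apply, LinearMap.lcomp_apply, LinearMap.llcomp_apply,
    LinearMap.neg_apply, TensorProduct.map_tmul, LinearMap.id_apply, LinearEquiv.coe_coe,
    TensorProduct.lift.equiv_apply, LinearMap.lflip_apply, TensorProduct.lcurry_apply,
    map_sub]
  have key : ∀ w : N ⊗[k] C,
      ((TensorProduct.lift.equiv (RingHom.id k) N C V)
          ((((TensorProduct.lcurry (RingHom.id k) C M (N →ₗ[k] V)) g).flip y).flip))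
        w = (TensorProduct.lift g.flip) ((TensorProduct.assoc k N C M) (w ⊗ₜ[k] y)) := by
    intro w
    induction w using TensorProduct.induction_on with
    | zero => simp
    | tmul x₀ x₁ => simp
    | add w₁ w₂ h₁ h₂ =>
      rw [map_add, TensorProduct.add_tmul, map_add, map_add, h₁, h₂]
  rw [key]
  abel


end Extras

/-- For a graded coalgebra `C`, a graded right `C`-comodule `N`,
a graded left `C`-comodule `M` and a graded vector space `V`, there is a natural
isomorphism of graded vector spaces
`Hom_k(N □_C M, V) ≅ Cohom_C(M, Hom_k(N, V))`,
where `Hom_k(N, V)` carries its natural graded left `C`-contramodule structure.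
Here `Cohom_C(M, P)` is presented as the cokernel of `cohomRelations`, and the
isomorphism is induced (degreewise) by `h ↦ (lift h.flip)|_{N □_C M}`. -/
theorem cotensor_hom_iso_cohom
    (𝒞 : ℤ → Submodule k C) [DirectSum.Decomposition 𝒞]
    (hcomul_graded : ∀ n : ℤ, ∀ c ∈ 𝒞 n, ∃ (ι : Type) (s : Finset ι)
        (x y : ι → C) (degx : ι → ℤ),
        (∀ t ∈ s, x t ∈ 𝒞 (degx t) ∧ y t ∈ 𝒞 (n - degx t)) ∧
        Coalgebra.comul (R := k) c = ∑ t ∈ s, x t ⊗ₜ[k] y t)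
    (hcounit_graded : ∀ n : ℤ, n ≠ 0 → ∀ c ∈ 𝒞 n, Coalgebra.counit (R := k) c = 0)
    -- `N` is a graded right `C`-comodule:
    (ρN : N →ₗ[k] N ⊗[k] C)
    (ρN_coassoc : (TensorProduct.assoc k N C C).toLinearMap.comp
        ((TensorProduct.map ρN LinearMap.id).comp ρN)
      = (TensorProduct.map LinearMap.id (Coalgebra.comul (R := k))).comp ρN)
    (ρN_counit : (TensorProduct.rid k N).toLinearMap.comp
        ((TensorProduct.map LinearMap.id (Coalgebra.counit (R := k))).comp ρN)
      = LinearMap.id)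
    (𝒩 : ℤ → Submodule k N) [DirectSum.Decomposition 𝒩]
    (ρN_graded : ∀ n : ℤ, ∀ z ∈ 𝒩 n, ∃ (ι : Type) (s : Finset ι)
        (x₀ : ι → N) (x₁ : ι → C) (degx : ι → ℤ),
        (∀ t ∈ s, x₀ t ∈ 𝒩 (degx t) ∧ x₁ t ∈ 𝒞 (n - degx t)) ∧
        ρN z = ∑ t ∈ s, x₀ t ⊗ₜ[k] x₁ t)
    -- `M` is a graded left `C`-comodule:
    (ρM : M →ₗ[k] C ⊗[k] M)
    (ρM_coassoc : (TensorProduct.map (Coalgebra.comul (R := k)) LinearMap.id).comp ρM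
      = ((TensorProduct.assoc k C C M).symm.toLinearMap.comp
          ((TensorProduct.map LinearMap.id ρM).comp ρM)))
    (ρM_counit : (TensorProduct.lid k M).toLinearMap.comp
        ((TensorProduct.map (Coalgebra.counit (R := k)) LinearMap.id).comp ρM)
      = LinearMap.id)
    (ℳ : ℤ → Submodule k M) [DirectSum.Decomposition ℳ]
    (ρM_graded : ∀ n : ℤ, ∀ z ∈ ℳ n, ∃ (ι : Type) (s : Finset ι)
        (y₁ : ι → C) (y₀ : ι → M) (degy : ι → ℤ),
        (∀ t ∈ s, y₁ t ∈ 𝒞 (degy t) ∧ y₀ t ∈ ℳ (n - degy t)) ∧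
        ρM z = ∑ t ∈ s, y₁ t ⊗ₜ[k] y₀ t)
    -- `V` is a graded vector space:
    (𝒱 : ℤ → Submodule k V) [DirectSum.Decomposition 𝒱] :
    -- the degree-`p` homogeneous part of `Hom_k(M, Hom_k(N, V))`:
    let SHom : ℤ → Set (M →ₗ[k] (N →ₗ[k] V)) := fun p =>
      {h | ∀ (m j : ℤ) (y : M) (x : N), y ∈ ℳ m → x ∈ 𝒩 j →
        h y x ∈ 𝒱 (j + (m + p))}
    -- the induced grading on `N ⊗ M`:
    let grT : ℤ → Submodule k (N ⊗[k] M) := fun n =>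
      Submodule.span k {z : N ⊗[k] M |
        ∃ a : ℤ, ∃ x ∈ 𝒩 a, ∃ y ∈ ℳ (n - a), z = x ⊗ₜ[k] y}
    -- the degree-`p` homogeneous part of `Hom_k(N □_C M, V)`:
    let SK : ℤ → Set (↥(cotensor (k := k) ρN ρM) →ₗ[k] V) := fun p =>
      {φ | ∀ (n : ℤ) (z : ↥(cotensor (k := k) ρN ρM)),
        (z : N ⊗[k] M) ∈ grT n → φ z ∈ 𝒱 (n + p)}
    -- the natural map `Hom_k(M, Hom_k(N, V)) → Hom_k(N □_C M, V)`:
    let Θ : (M →ₗ[k] (N →ₗ[k] V)) → (↥(cotensor (k := k) ρN ρM) →ₗ[k] V) :=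
      fun h => (TensorProduct.lift h.flip).comp (cotensor (k := k) ρN ρM).subtype
    -- `Θ` preserves degrees, is degreewise surjective, and its kernel is exactly
    -- the subspace of relations defining `Cohom_C(M, Hom_k(N, V))`; hence it induces
    -- an isomorphism of graded vector spaces
    -- `Cohom_C(M, Hom_k(N, V)) ≅ Hom_k(N □_C M, V)`:
    (∀ (p : ℤ) (h : M →ₗ[k] (N →ₗ[k] V)), h ∈ SHom p → Θ h ∈ SK p) ∧
    (∀ (p : ℤ) (φ : ↥(cotensor (k := k) ρN ρM) →ₗ[k] V), φ ∈ SK p →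
      ∃ h ∈ SHom p, Θ h = φ) ∧
    (∀ (p : ℤ) (h : M →ₗ[k] (N →ₗ[k] V)), h ∈ SHom p →
      (Θ h = 0 ↔ h ∈ LinearMap.range (cohomRelations (V := V) ρN ρM))) := by
  intro SHom grT SK Θ
  refine ⟨?_, ?_, ?_⟩
  · -- Θ preserves degrees
    intro p h hh n z hz
    have main : ∀ w ∈ grTdef 𝒩 ℳ n, TensorProduct.lift h.flip w ∈ 𝒱 (n + p) := by
      intro w hw
      induction hw using Submodule.span_induction with
      | mem u hu =>
        obtain ⟨a, x, hx, y, hy, rfl⟩ := hu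
        have hv := hh (n - a) a y x hy hx
        rw [show a + (n - a + p) = n + p by ring] at hv
        simpa using hv
      | zero => simp only [map_zero]; exact zero_mem _
      | add _ _ _ _ h₁ h₂ => rw [map_add]; exact add_mem h₁ h₂
      | smul r _ _ h₁ => rw [map_smul]; exact Submodule.smul_mem _ r h₁
    exact main (z : N ⊗[k] M) hz
  · -- Θ is degreewise surjective
    intro p φ hφ
    obtain ⟨f, hf⟩ := LinearMap.exists_extend φ
    classical
    have hQ2lift : ∀ (t : ℤ × ℤ) (w : N ⊗[k] M),
        TensorProduct.lift (hExt 𝒩 ℳ 𝒱 p f).flip (Q2 𝒩 ℳ t w)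
          = gproj 𝒱 (t.1 + t.2 + p) (f (Q2 𝒩 ℳ t w)) := by
      intro t w
      induction w using TensorProduct.induction_on with
      | zero => simp
      | tmul x y =>
        show TensorProduct.lift (hExt 𝒩 ℳ 𝒱 p f).flip
            (gproj 𝒩 t.1 x ⊗ₜ[k] gproj ℳ t.2 y) = _
        rw [TensorProduct.lift.tmul]
        exact hExt_apply 𝒩 ℳ 𝒱 p f (gproj_mem 𝒩 t.1 x) (gproj_mem ℳ t.2 y)
      | add w₁ w₂ h₁ h₂ => rw [map_add, map_add, h₁, h₂, map_add, map_add]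
    refine ⟨hExt 𝒩 ℳ 𝒱 p f, ?_, ?_⟩
    · intro m j y x hy hx
      rw [hExt_apply 𝒩 ℳ 𝒱 p f hx hy, show j + (m + p) = j + m + p by ring]
      exact gproj_mem 𝒱 _ _
    · apply LinearMap.ext
      rintro ⟨z, hz⟩
      show TensorProduct.lift (hExt 𝒩 ℳ 𝒱 p f).flip z = φ ⟨z, hz⟩
      obtain ⟨s, hs0, hssum⟩ := Q2_sum 𝒩 ℳ z
      have hfiber := Finset.sum_fiberwise_of_maps_to
        (g := fun t : ℤ × ℤ => t.1 + t.2) (s := s)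
        (t := s.image fun t : ℤ × ℤ => t.1 + t.2)
        (fun x hx => Finset.mem_image_of_mem _ hx) (fun t => Q2 𝒩 ℳ t z)
      have hmemT : ∀ n : ℤ,
          (∑ t ∈ s.filter (fun t : ℤ × ℤ => t.1 + t.2 = n), Q2 𝒩 ℳ t z)
            ∈ grTdef 𝒩 ℳ n := by
        intro n
        refine Submodule.sum_mem _ fun t ht => ?_
        obtain ⟨-, h2⟩ := Finset.mem_filter.mp ht
        rw [← h2]
        exact Q2_mem_grT 𝒩 ℳ t z
      have hcotF : ∀ n ∈ s.image (fun t : ℤ × ℤ => t.1 + t.2),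
          cotD ρN ρM (∑ t ∈ s.filter (fun t : ℤ × ℤ => t.1 + t.2 = n), Q2 𝒩 ℳ t z)
            = 0 := by
        refine grU_indep 𝒩 𝒞 ℳ _ _ (fun n _ => ?_) ?_
        · exact cotD_mem_grU 𝒩 𝒞 ℳ ρN ρM ρN_graded ρM_graded (hmemT n)
        · rw [← map_sum, hfiber, ← hssum]
          exact hz
      have hmemK : ∀ n ∈ s.image (fun t : ℤ × ℤ => t.1 + t.2),
          (∑ t ∈ s.filter (fun t : ℤ × ℤ => t.1 + t.2 = n), Q2 𝒩 ℳ t z)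
            ∈ cotensor (k := k) ρN ρM := fun n hn => hcotF n hn
      have hfF : ∀ n ∈ s.image (fun t : ℤ × ℤ => t.1 + t.2),
          f (∑ t ∈ s.filter (fun t : ℤ × ℤ => t.1 + t.2 = n), Q2 𝒩 ℳ t z)
            ∈ 𝒱 (n + p) := by
        intro n hn
        have := DFunLike.congr_fun hf
          (⟨_, hmemK n hn⟩ : ↥(cotensor (k := k) ρN ρM))
        simp only [LinearMap.comp_apply, Submodule.coe_subtype] at this
        rw [this]
        exact hφ n _ (hmemT n)
      calc TensorProduct.lift (hExt 𝒩 ℳ 𝒱 p f).flip z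
          = ∑ t ∈ s, TensorProduct.lift (hExt 𝒩 ℳ 𝒱 p f).flip (Q2 𝒩 ℳ t z) := by
            conv_lhs => rw [hssum]
            rw [map_sum]
        _ = ∑ t ∈ s, gproj 𝒱 (t.1 + t.2 + p) (f (Q2 𝒩 ℳ t z)) :=
            Finset.sum_congr rfl fun t _ => hQ2lift t z
        _ = ∑ n ∈ s.image (fun t : ℤ × ℤ => t.1 + t.2),
              ∑ t ∈ s.filter (fun t : ℤ × ℤ => t.1 + t.2 = n),
                gproj 𝒱 (t.1 + t.2 + p) (f (Q2 𝒩 ℳ t z)) :=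
            (Finset.sum_fiberwise_of_maps_to
              (fun x hx => Finset.mem_image_of_mem _ hx) _).symm
        _ = ∑ n ∈ s.image (fun t : ℤ × ℤ => t.1 + t.2),
              f (∑ t ∈ s.filter (fun t : ℤ × ℤ => t.1 + t.2 = n), Q2 𝒩 ℳ t z) := by
            refine Finset.sum_congr rfl fun n hn => ?_
            have : ∀ t ∈ s.filter (fun t : ℤ × ℤ => t.1 + t.2 = n),
                gproj 𝒱 (t.1 + t.2 + p) (f (Q2 𝒩 ℳ t z))
                  = gproj 𝒱 (n + p) (f (Q2 𝒩 ℳ t z)) := by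
              intro t ht
              rw [(Finset.mem_filter.mp ht).2]
            rw [Finset.sum_congr rfl this, ← map_sum, ← map_sum]
            exact gproj_of_mem_same 𝒱 (hfF n hn)
        _ = f (∑ n ∈ s.image (fun t : ℤ × ℤ => t.1 + t.2),
              ∑ t ∈ s.filter (fun t : ℤ × ℤ => t.1 + t.2 = n), Q2 𝒩 ℳ t z) := by
            rw [map_sum]
        _ = f z := by rw [hfiber, ← hssum]
        _ = φ ⟨z, hz⟩ := by
            have := DFunLike.congr_fun hf (⟨z, hz⟩ : ↥(cotensor (k := k) ρN ρM))
            simpa using this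
  · -- kernel of Θ
    intro p h hh
    constructor
    · intro hΘ0
      have hker : LinearMap.ker (cotD ρN ρM)
          ≤ LinearMap.ker (TensorProduct.lift h.flip) := by
        intro z hzk
        have := DFunLike.congr_fun hΘ0 (⟨z, hzk⟩ : ↥(cotensor (k := k) ρN ρM))
        exact this
      obtain ⟨ψ, hψ⟩ := exists_factor (cotD ρN ρM) (TensorProduct.lift h.flip) hker
      refine ⟨-(TensorProduct.curry ψ).flip, ?_⟩
      apply liftflip_inj
      rw [cohomRelations_lift]
      have hg : TensorProduct.lift (-(TensorProduct.curry ψ).flip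
          : C ⊗[k] M →ₗ[k] (N →ₗ[k] V)).flip = -ψ := by
        apply TensorProduct.ext'
        intro x w
        simp [TensorProduct.curry_apply]
      rw [hg, LinearMap.neg_comp, neg_neg, hψ]
    · rintro ⟨g, rfl⟩
      apply LinearMap.ext
      rintro ⟨z, hzk⟩
      show TensorProduct.lift (cohomRelations (V := V) ρN ρM g).flip z = 0
      rw [cohomRelations_lift]
      have : cotD ρN ρM z = 0 := hzk
      simp [this]


end
end
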